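/- arXiv:2404.19422 — 2 statements merged into one kernel-verified Lean document; each statement's English description precedes it below -/
import Mathlib

section
/- If P is a fastest path from s to z in a temporal graph G (i.e., arr(P) − dep(P) is minimum over all time-respecting paths from s to z), then there exists a useful dominating path Q from s to z with the same route as P, dep(Q) = dep(P), and arr(Q) = arr(P); in particular Q is also a fastest path. -/
/-- A temporal edge with tail, head, departure time and arrival time. -/
structure TEdge (V : Type) where
  tail : V
  head : V
  dep : ℕ
  arr : ℕ

/-- A temporal graph: a set of temporal edges, each with arrival strictly after departure. -/
structure TGraph (V : Type) where
  edges : Set (TEdge V)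
  valid : ∀ e ∈ edges, e.dep < e.arr

variable {V : Type}

/-- Time-respecting path: nonempty sequence of edges of `G`, consecutive edges share
endpoints and each edge departs no earlier than the previous edge arrives. -/
def TRP (G : TGraph V) (p : List (TEdge V)) : Prop :=
  p ≠ [] ∧ (∀ e ∈ p, e ∈ G.edges) ∧
    List.Chain' (fun e f => e.head = f.tail ∧ e.arr ≤ f.dep) p

/-- Departure time of a path (departure of its first edge). -/
def pdep (p : List (TEdge V)) : ℕ := (p.head?.elim 0 TEdge.dep)

/-- Arrival time of a path (arrival of its last edge). -/
def parr (p : List (TEdge V)) : ℕ := (p.getLast?.elim 0 TEdge.arr)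

/-- Start vertex of a path. -/
def startV (p : List (TEdge V)) : Option V := p.head?.map TEdge.tail

/-- End vertex of a path. -/
def endV (p : List (TEdge V)) : Option V := p.getLast?.map TEdge.head

/-- The route (sequence of vertices) a path goes through. -/
def routeOf (p : List (TEdge V)) : List V :=
  p.map TEdge.tail ++ (p.getLast?.elim [] fun e => [e.head])

/-- `ℙ(s,z,r,t)`: time-respecting paths from `s` to `z` through route `r` departing at `t`. -/
def PathsIn (G : TGraph V) (s z : V) (r : List V) (t : ℕ) : Set (List (TEdge V)) :=
  {p | TRP G p ∧ startV p = some s ∧ endV p = some z ∧ routeOf p = r ∧ pdep p = t}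

/-- Dominating path in `ℙ(s,z,r,t)`. -/
def DominatingIn (G : TGraph V) (s z : V) (r : List V) (t : ℕ) (p : List (TEdge V)) : Prop :=
  p ∈ PathsIn G s z r t ∧ ∀ q ∈ PathsIn G s z r t, parr p ≤ parr q

/-- A path is dominating with respect to its own start vertex, route and departure time. -/
def DomSelf (G : TGraph V) (p : List (TEdge V)) : Prop :=
  TRP G p ∧ ∀ q, TRP G q → startV q = startV p → routeOf q = routeOf p →
    pdep q = pdep p → parr p ≤ parr q

/-- Useful dominating path: every (nonempty) prefix is dominating on its own route
and departure time. -/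
def UsefulDom (G : TGraph V) (p : List (TEdge V)) : Prop :=
  ∀ j, 1 ≤ j → j ≤ p.length → DomSelf G (p.take j)

/-- The edge relation of the edge-scan-dependency graph: `v_e → v_f` iff `f` departs
from the head of `e` no earlier than `e` arrives and no parallel edge with the same
endpoints departs no earlier than `arr e` and arrives strictly before `f`. -/
def ESDGAdj (G : TGraph V) (e f : TEdge V) : Prop :=
  e ∈ G.edges ∧ f ∈ G.edges ∧ e.head = f.tail ∧ e.arr ≤ f.dep ∧
    ¬ ∃ g ∈ G.edges, g.tail = f.tail ∧ g.head = f.head ∧ e.arr ≤ g.dep ∧ g.arr < f.arr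

/-- A directed path in the ESDG, given as the corresponding sequence of temporal edges. -/
def ESDGPath (G : TGraph V) (p : List (TEdge V)) : Prop :=
  p ≠ [] ∧ (∀ e ∈ p, e ∈ G.edges) ∧ List.Chain' (ESDGAdj G) p

/-- Earliest arrival path from `s` to `z` with ready time `rt`. -/
def EAPath (G : TGraph V) (s z : V) (rt : ℕ) (p : List (TEdge V)) : Prop :=
  TRP G p ∧ startV p = some s ∧ endV p = some z ∧ rt ≤ pdep p ∧
    ∀ q, TRP G q → startV q = some s → endV q = some z → rt ≤ pdep q → parr p ≤ parr q

/-- Fastest path from `s` to `z`: minimizes journey time `arr - dep`. -/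
def FastestPath (G : TGraph V) (s z : V) (p : List (TEdge V)) : Prop :=
  TRP G p ∧ startV p = some s ∧ endV p = some z ∧
    ∀ q, TRP G q → startV q = some s → endV q = some z →
      parr p - pdep p ≤ parr q - pdep q

lemma routeOf_cons (e : TEdge V) {p : List (TEdge V)} (hp : p ≠ []) :
    routeOf (e :: p) = e.tail :: routeOf p := by
  obtain ⟨f, p', rfl⟩ := List.exists_cons_of_ne_nil hp
  simp [routeOf]

lemma routeOf_single (e : TEdge V) : routeOf [e] = [e.tail, e.head] := by
  simp [routeOf]

lemma routeOf_length {p : List (TEdge V)} (hp : p ≠ []) :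
    (routeOf p).length = p.length + 1 := by
  induction p with
  | nil => exact absurd rfl hp
  | cons e p ih =>
    rcases eq_or_ne p [] with rfl | hp'
    · simp [routeOf_single]
    · rw [routeOf_cons e hp', List.length_cons, ih hp']; simp

lemma parr_cons (e : TEdge V) {p : List (TEdge V)} (hp : p ≠ []) :
    parr (e :: p) = parr p := by
  obtain ⟨f, p', rfl⟩ := List.exists_cons_of_ne_nil hp
  simp [parr]

lemma parr_single (e : TEdge V) : parr [e] = e.arr := by simp [parr]

lemma pdep_cons (e : TEdge V) (p : List (TEdge V)) : pdep (e :: p) = e.dep := by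
  simp [pdep]

lemma startV_cons (e : TEdge V) (p : List (TEdge V)) :
    startV (e :: p) = some e.tail := by simp [startV]

lemma startV_eq_head (p : List (TEdge V)) : startV p = (routeOf p).head? := by
  cases p with
  | nil => simp [startV, routeOf]
  | cons e p =>
    cases p with
    | nil => simp [startV, routeOf]
    | cons f p' => simp [startV, routeOf_cons e (by simp : (f :: p' : List (TEdge V)) ≠ []), routeOf]

lemma endV_eq_getLast (p : List (TEdge V)) : endV p = (routeOf p).getLast? := by
  cases hp : p.getLast? with
  | none => simp [endV, routeOf, hp, List.getLast?_eq_none_iff.mp hp]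
  | some e =>
    have hne : p ≠ [] := by rintro rfl; simp at hp
    simp [endV, routeOf, hp, List.getLast?_append]

lemma exists_min_arr (C : TEdge V → Prop) (h : ∃ e, C e) :
    ∃ e, C e ∧ ∀ f, C f → e.arr ≤ f.arr := by
  obtain ⟨e, he⟩ := h
  have hS : (Set.range (fun e : {e // C e} => e.1.arr)).Nonempty := ⟨e.arr, ⟨⟨e, he⟩, rfl⟩⟩
  obtain ⟨⟨e₀, he₀⟩, he₀min⟩ := Nat.sInf_mem hS
  refine ⟨e₀, he₀, fun f hf => ?_⟩
  exact le_trans (le_of_eq he₀min) (Nat.sInf_le ⟨⟨f, hf⟩, rfl⟩)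

lemma trp_cons {G : TGraph V} {e : TEdge V} {p : List (TEdge V)} (h : TRP G (e :: p))
    (hp : p ≠ []) :
    e ∈ G.edges ∧ TRP G p ∧ startV p = some e.head ∧ e.arr ≤ pdep p := by
  obtain ⟨f, p', rfl⟩ := List.exists_cons_of_ne_nil hp
  obtain ⟨-, hmem, hch⟩ := h
  simp only [List.Chain', List.isChain_cons_cons] at hch
  exact ⟨hmem e (by simp), ⟨by simp, fun g hg => hmem g (by simp [hg]), hch.2⟩,
    by simp [startV, hch.1.1], by simpa [pdep] using hch.1.2⟩

lemma trp_cons_of {G : TGraph V} {e : TEdge V} {p : List (TEdge V)} (he : e ∈ G.edges)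
    (hq : TRP G p) (h1 : startV p = some e.head) (h2 : e.arr ≤ pdep p) :
    TRP G (e :: p) := by
  obtain ⟨hne, hmem, hch⟩ := hq
  refine ⟨by simp, ?_, ?_⟩
  · intro g hg
    rcases List.mem_cons.mp hg with rfl | hg
    · exact he
    · exact hmem g hg
  · simp only [List.Chain', List.isChain_cons]
    refine ⟨?_, hch⟩
    intro f hf
    obtain ⟨g, p', rfl⟩ := List.exists_cons_of_ne_nil hne
    simp [startV] at h1
    simp at hf
    subst hf
    exact ⟨h1.symm, by simpa [pdep] using h2⟩

lemma pdep_le_parr {G : TGraph V} : ∀ {p : List (TEdge V)}, TRP G p → pdep p ≤ parr p := by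
  intro p
  induction p with
  | nil => intro h; exact absurd rfl h.1
  | cons e p ih =>
    intro h
    rcases eq_or_ne p [] with rfl | hp
    · simpa [pdep, parr] using le_of_lt (G.valid e (h.2.1 e (by simp)))
    · obtain ⟨he, htrp, -, harr⟩ := trp_cons h hp
      rw [pdep_cons, parr_cons e hp]
      exact le_trans (le_of_lt (G.valid e he)) (le_trans harr (ih htrp))

lemma trp_take {G : TGraph V} {p : List (TEdge V)} (h : TRP G p) {j : ℕ} (hj : 1 ≤ j) :
    TRP G (p.take j) := by
  refine ⟨?_, fun e he => h.2.1 e (List.mem_of_mem_take he), h.2.2.prefix (List.take_prefix j p)⟩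
  simp only [ne_eq, List.take_eq_nil_iff, not_or]
  exact ⟨by omega, h.1⟩

lemma startV_take {p : List (TEdge V)} {j : ℕ} (hj : 1 ≤ j) :
    startV (p.take j) = startV p := by
  cases p with
  | nil => simp
  | cons e p =>
    obtain ⟨j', rfl⟩ : ∃ j', j = j' + 1 := ⟨j - 1, by omega⟩
    simp [startV, List.take_succ_cons]

lemma route_decomp {G : TGraph V} {q : List (TEdge V)} {a b : V} {r : List V}
    (hq : TRP G q) (h : routeOf q = a :: b :: r) :
    ∃ f q', q = f :: q' ∧ f ∈ G.edges ∧ f.tail = a ∧ f.head = b ∧ pdep q = f.dep ∧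
      ((q' = [] ∧ r = [] ∧ parr q = f.arr) ∨
       (q' ≠ [] ∧ TRP G q' ∧ routeOf q' = b :: r ∧ f.arr ≤ pdep q' ∧ parr q = parr q')) := by
  obtain ⟨f, q', rfl⟩ := List.exists_cons_of_ne_nil hq.1
  rcases eq_or_ne q' [] with rfl | hq'
  · rw [routeOf_single] at h
    simp only [List.cons.injEq] at h
    exact ⟨f, [], rfl, hq.2.1 f (by simp), h.1, h.2.1, by simp [pdep],
      Or.inl ⟨rfl, h.2.2.symm, by simp [parr]⟩⟩
  · rw [routeOf_cons f hq'] at h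
    simp only [List.cons.injEq] at h
    obtain ⟨hfmem, htrp, hstart, harr⟩ := trp_cons hq hq'
    have hfh : f.head = b := by
      have := startV_eq_head q'
      rw [hstart, h.2] at this
      simpa using this
    exact ⟨f, q', rfl, hfmem, h.1, hfh, by simp [pdep],
      Or.inr ⟨hq', htrp, h.2, harr, parr_cons f hq'⟩⟩

lemma dom_single {G : TGraph V} (e₀ : TEdge V) (cond : ℕ → Prop)
    (hmin : ∀ f, f ∈ G.edges → f.tail = e₀.tail → f.head = e₀.head → cond f.dep → e₀.arr ≤ f.arr)
    {q : List (TEdge V)} (hq : TRP G q) (hr : routeOf q = [e₀.tail, e₀.head])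
    (hc : cond (pdep q)) : e₀.arr ≤ parr q := by
  obtain ⟨f, q', rfl, hfmem, hft, hfh, hfdep, hcase⟩ := route_decomp hq hr
  have hfarr : e₀.arr ≤ f.arr := hmin f hfmem hft hfh (hfdep ▸ hc)
  rcases hcase with ⟨-, -, hparr⟩ | ⟨hq'ne, -, hq'route, -, -⟩
  · rw [hparr]; exact hfarr
  · exfalso
    have := routeOf_length hq'ne
    rw [hq'route] at this
    exact hq'ne (List.length_eq_zero_iff.mp (by simpa using this.symm))

lemma dom_cons {G : TGraph V} (e₀ : TEdge V) (Q' : List (TEdge V)) (cond : ℕ → Prop) (j' : ℕ)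
    (hj1 : 1 ≤ j') (hQ'ne : Q' ≠ [])
    (hstartQ' : startV Q' = some e₀.head)
    (hmin : ∀ f, f ∈ G.edges → f.tail = e₀.tail → f.head = e₀.head → cond f.dep → e₀.arr ≤ f.arr)
    (hSD' : ∀ q', TRP G q' → routeOf q' = routeOf (Q'.take j') → e₀.arr ≤ pdep q' →
      parr (Q'.take j') ≤ parr q')
    {q : List (TEdge V)} (hq : TRP G q)
    (hroute : routeOf q = routeOf ((e₀ :: Q').take (j' + 1)))
    (hcond : cond (pdep q)) :
    parr ((e₀ :: Q').take (j' + 1)) ≤ parr q := by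
  have htk : (e₀ :: Q').take (j' + 1) = e₀ :: Q'.take j' := by simp [List.take_succ_cons]
  have htkne : Q'.take j' ≠ [] := by
    simp only [ne_eq, List.take_eq_nil_iff, not_or]
    exact ⟨by omega, hQ'ne⟩
  have hhead : (routeOf (Q'.take j')).head? = some e₀.head := by
    rw [← startV_eq_head, startV_take hj1, hstartQ']
  obtain ⟨r, hr⟩ : ∃ r, routeOf (Q'.take j') = e₀.head :: r := by
    cases h : routeOf (Q'.take j') with
    | nil => rw [h] at hhead; simp at hhead
    | cons a r =>
      rw [h] at hhead; simp at hhead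
      exact ⟨r, by rw [hhead]⟩
  have hroute' : routeOf q = e₀.tail :: e₀.head :: r := by
    rw [hroute, htk, routeOf_cons _ htkne, hr]
  obtain ⟨f, q', rfl, hfmem, hft, hfh, hfdep, hcase⟩ := route_decomp hq hroute'
  have hfarr : e₀.arr ≤ f.arr := hmin f hfmem hft hfh (hfdep ▸ hcond)
  rcases hcase with ⟨-, hrnil, -⟩ | ⟨hq'ne, hq'trp, hq'route, hfq', hparr⟩
  · exfalso
    have := routeOf_length htkne
    rw [hr, hrnil] at this
    exact htkne (List.length_eq_zero_iff.mp (by simpa using this.symm))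
  · have hd := hSD' q' hq'trp (by rw [hq'route, hr]) (le_trans hfarr hfq')
    rw [htk, parr_cons _ htkne, hparr]
    exact hd

/-- Greedy earliest-arrival replacement along a fixed route, with a ready time `rt`. -/
lemma lemmaA (G : TGraph V) :
    ∀ P : List (TEdge V), TRP G P → ∀ rt : ℕ, rt ≤ pdep P →
    ∃ Q, TRP G Q ∧ routeOf Q = routeOf P ∧ rt ≤ pdep Q ∧ parr Q ≤ parr P ∧
      ∀ j, 1 ≤ j → j ≤ Q.length → ∀ q, TRP G q → routeOf q = routeOf (Q.take j) →
        rt ≤ pdep q → parr (Q.take j) ≤ parr q := by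
  intro P
  induction P with
  | nil => intro hP; exact absurd rfl hP.1
  | cons e P' IH =>
    intro hP rt hrt
    have hrtdep : rt ≤ e.dep := by simpa [pdep] using hrt
    have hCe : e ∈ G.edges ∧ e.tail = e.tail ∧ e.head = e.head ∧ rt ≤ e.dep :=
      ⟨hP.2.1 e (by simp), rfl, rfl, hrtdep⟩
    obtain ⟨e₀, hC, hmin⟩ := exists_min_arr
      (fun f => f ∈ G.edges ∧ f.tail = e.tail ∧ f.head = e.head ∧ rt ≤ f.dep) ⟨e, hCe⟩
    have he₀arr : e₀.arr ≤ e.arr := hmin e hCe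
    have hmin' : ∀ f, f ∈ G.edges → f.tail = e₀.tail → f.head = e₀.head → rt ≤ f.dep →
        e₀.arr ≤ f.arr := by
      intro f h1 h2 h3 h4
      exact hmin f ⟨h1, by rw [h2, hC.2.1], by rw [h3, hC.2.2.1], h4⟩
    rcases eq_or_ne P' [] with rfl | hP'ne
    · refine ⟨[e₀], ⟨by simp, ?_, List.isChain_singleton _⟩, ?_, ?_, ?_, ?_⟩
      · intro g hg; simp at hg; subst hg; exact hC.1
      · rw [routeOf_single, routeOf_single, hC.2.1, hC.2.2.1]
      · simpa [pdep] using hC.2.2.2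
      · simpa [parr] using he₀arr
      · intro j hj1 hjle q hq hroute hrtq
        have hj : j = 1 := by simpa using le_antisymm hjle hj1
        subst hj
        simp only [List.take_succ_cons, List.take_nil] at hroute ⊢
        rw [parr_single]
        exact dom_single e₀ (fun n => rt ≤ n) hmin' hq (by rw [hroute, routeOf_single]) hrtq
    · obtain ⟨he, hP', hstartP', harrP'⟩ := trp_cons hP hP'ne
      obtain ⟨Q', hQ'trp, hQ'route, hQ'dep, hQ'parr, hSD'⟩ :=
        IH hP' e₀.arr (le_trans he₀arr harrP')
      have hQ'ne : Q' ≠ [] := hQ'trp.1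
      have hstartQ' : startV Q' = some e₀.head := by
        rw [startV_eq_head, hQ'route, ← startV_eq_head, hstartP', hC.2.2.1]
      refine ⟨e₀ :: Q', trp_cons_of hC.1 hQ'trp hstartQ' hQ'dep, ?_, ?_, ?_, ?_⟩
      · rw [routeOf_cons _ hQ'ne, routeOf_cons _ hP'ne, hQ'route, hC.2.1]
      · simpa [pdep] using hC.2.2.2
      · rw [parr_cons _ hQ'ne, parr_cons _ hP'ne]; exact hQ'parr
      · intro j hj1 hjle q hq hroute hrtq
        obtain ⟨j', rfl⟩ : ∃ j', j = j' + 1 := ⟨j - 1, by omega⟩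
        rcases Nat.eq_zero_or_pos j' with rfl | hj'
        · simp only [List.take_succ_cons, List.take_zero] at hroute ⊢
          rw [parr_single]
          exact dom_single e₀ (fun n => rt ≤ n) hmin' hq (by rw [hroute, routeOf_single]) hrtq
        · exact dom_cons e₀ Q' (fun n => rt ≤ n) j' hj' hQ'ne hstartQ' hmin'
            (fun q' h1 h2 h3 => hSD' j' hj' (by simpa using hjle) q' h1 h2 h3) hq hroute hrtq

/-- Main construction: a useful dominating path with the same route, departure and
no larger arrival. -/
lemma exists_useful (G : TGraph V) (P : List (TEdge V)) (hP : TRP G P) :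
    ∃ Q, TRP G Q ∧ routeOf Q = routeOf P ∧ pdep Q = pdep P ∧ parr Q ≤ parr P ∧
      UsefulDom G Q := by
  obtain ⟨e, P', rfl⟩ := List.exists_cons_of_ne_nil hP.1
  have hCe : e ∈ G.edges ∧ e.tail = e.tail ∧ e.head = e.head ∧ e.dep = e.dep :=
    ⟨hP.2.1 e (by simp), rfl, rfl, rfl⟩
  obtain ⟨e₀, hC, hmin⟩ := exists_min_arr
    (fun f => f ∈ G.edges ∧ f.tail = e.tail ∧ f.head = e.head ∧ f.dep = e.dep) ⟨e, hCe⟩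
  have he₀arr : e₀.arr ≤ e.arr := hmin e hCe
  have hmin' : ∀ f, f ∈ G.edges → f.tail = e₀.tail → f.head = e₀.head → f.dep = e₀.dep →
      e₀.arr ≤ f.arr := by
    intro f h1 h2 h3 h4
    exact hmin f ⟨h1, by rw [h2, hC.2.1], by rw [h3, hC.2.2.1], by rw [h4, hC.2.2.2]⟩
  rcases eq_or_ne P' [] with rfl | hP'ne
  · refine ⟨[e₀], ⟨by simp, ?_, List.isChain_singleton _⟩, ?_, ?_, ?_, ?_⟩
    · intro g hg; simp at hg; subst hg; exact hC.1
    · rw [routeOf_single, routeOf_single, hC.2.1, hC.2.2.1]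
    · simpa [pdep] using hC.2.2.2
    · simpa [parr] using he₀arr
    · intro j hj1 hjle
      have hj : j = 1 := by simpa using le_antisymm hjle hj1
      subst hj
      simp only [List.take_succ_cons, List.take_nil]
      refine ⟨⟨by simp, ?_, List.isChain_singleton _⟩, ?_⟩
      · intro g hg; simp at hg; subst hg; exact hC.1
      · intro q hq hstart hroute hdep
        rw [parr_single]
        exact dom_single e₀ (fun n => n = e₀.dep) hmin' hq (by rw [hroute, routeOf_single])
          (by simpa [pdep] using hdep)
  · obtain ⟨he, hP', hstartP', harrP'⟩ := trp_cons hP hP'ne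
    obtain ⟨Q', hQ'trp, hQ'route, hQ'dep, hQ'parr, hSD'⟩ :=
      lemmaA G P' hP' e₀.arr (le_trans he₀arr harrP')
    have hQ'ne : Q' ≠ [] := hQ'trp.1
    have hstartQ' : startV Q' = some e₀.head := by
      rw [startV_eq_head, hQ'route, ← startV_eq_head, hstartP', hC.2.2.1]
    have hQtrp : TRP G (e₀ :: Q') := trp_cons_of hC.1 hQ'trp hstartQ' hQ'dep
    refine ⟨e₀ :: Q', hQtrp, ?_, ?_, ?_, ?_⟩
    · rw [routeOf_cons _ hQ'ne, routeOf_cons _ hP'ne, hQ'route, hC.2.1]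
    · simpa [pdep] using hC.2.2.2
    · rw [parr_cons _ hQ'ne, parr_cons _ hP'ne]; exact hQ'parr
    · intro j hj1 hjle
      refine ⟨trp_take hQtrp hj1, ?_⟩
      intro q hq hstart hroute hdep
      have hdep' : pdep q = e₀.dep := by
        rw [hdep]
        obtain ⟨j', rfl⟩ : ∃ j', j = j' + 1 := ⟨j - 1, by omega⟩
        simp [pdep, List.take_succ_cons]
      obtain ⟨j', rfl⟩ : ∃ j', j = j' + 1 := ⟨j - 1, by omega⟩
      rcases Nat.eq_zero_or_pos j' with rfl | hj'
      · simp only [List.take_succ_cons, List.take_zero] at hroute ⊢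
        rw [parr_single]
        exact dom_single e₀ (fun n => n = e₀.dep) hmin' hq (by rw [hroute, routeOf_single]) hdep'
      · exact dom_cons e₀ Q' (fun n => n = e₀.dep) j' hj' hQ'ne hstartQ' hmin'
          (fun q' h1 h2 h3 => hSD' j' hj' (by simpa using hjle) q' h1 h2 h3) hq hroute hdep'

theorem stmt3 (G : TGraph V) (s z : V) (P : List (TEdge V))
    (hP : FastestPath G s z P) :
    ∃ Q, TRP G Q ∧ startV Q = some s ∧ endV Q = some z ∧
      routeOf Q = routeOf P ∧ pdep Q = pdep P ∧ parr Q = parr P ∧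
      UsefulDom G Q ∧ FastestPath G s z Q := by
  obtain ⟨hPtrp, hs, hz, hfast⟩ := hP
  obtain ⟨Q, hQtrp, hQroute, hQdep, hQparr, hQuseful⟩ := exists_useful G P hPtrp
  have hQstart : startV Q = some s := by
    rw [startV_eq_head, hQroute, ← startV_eq_head, hs]
  have hQend : endV Q = some z := by
    rw [endV_eq_getLast, hQroute, ← endV_eq_getLast, hz]
  have h1 : pdep P ≤ parr P := pdep_le_parr hPtrp
  have h2 : pdep Q ≤ parr Q := pdep_le_parr hQtrp
  have h3 := hfast Q hQtrp hQstart hQend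
  have hparr : parr Q = parr P := by omega
  refine ⟨Q, hQtrp, hQstart, hQend, hQroute, hQdep, hparr, hQuseful,
    hQtrp, hQstart, hQend, ?_⟩
  intro q hq h1q h2q
  calc parr Q - pdep Q = parr P - pdep P := by rw [hparr, hQdep]
  _ ≤ parr q - pdep q := hfast q hq h1q h2q
end

section
/- In a temporal graph G, the concatenation of a useful dominating path P from s to v with a single edge e from v to w is a useful dominating path, provided the resulting sequence is time-respecting and there is no edge e' from v to w with dep(e') ≥ arr(P) and arr(e') < arr(e). -/
variable {V : Type}

lemma parr_concat' (p : List (TEdge V)) (e : TEdge V) : parr (p ++ [e]) = e.arr := by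
  simp [parr]

lemma pdep_concat' (p : List (TEdge V)) (e : TEdge V) (h : p ≠ []) :
    pdep (p ++ [e]) = pdep p := by
  simp [pdep, List.head?_append_of_ne_nil _ h]

lemma startV_concat' (p : List (TEdge V)) (e : TEdge V) (h : p ≠ []) :
    startV (p ++ [e]) = startV p := by
  simp [startV, List.head?_append_of_ne_nil _ h]

lemma parr_eq_getLast (p : List (TEdge V)) (h : p ≠ []) : parr p = (p.getLast h).arr := by
  simp [parr, List.getLast?_eq_getLast h]

lemma routeOf_concat' (p : List (TEdge V)) (e : TEdge V) :
    routeOf (p ++ [e]) = p.map TEdge.tail ++ [e.tail, e.head] := by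
  simp [routeOf]

theorem stmt15 (G : TGraph V) (p : List (TEdge V)) (hne : p ≠ [])
    (hU : UsefulDom G p) (e : TEdge V) (he : e ∈ G.edges)
    (hend : endV p = some e.tail) (htr : parr p ≤ e.dep)
    (hmin : ¬ ∃ e' ∈ G.edges, e'.tail = e.tail ∧ e'.head = e.head ∧
      parr p ≤ e'.dep ∧ e'.arr < e.arr) :
    UsefulDom G (p ++ [e]) := by
  have hTRPp : TRP G p := by
    have := (hU p.length (by
      rcases List.exists_cons_of_ne_nil hne with ⟨a, l, rfl⟩
      simp) le_rfl).1
    simpa using this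
  have hlastp : (p.getLast hne).head = e.tail := by
    have : endV p = some ((p.getLast hne).head) := by
      simp [endV, List.getLast?_eq_getLast hne]
    rw [this] at hend
    exact Option.some.inj hend
  -- TRP of p ++ [e]
  have hTRPpe : TRP G (p ++ [e]) := by
    refine ⟨by simp, ?_, ?_⟩
    · intro f hf
      rcases List.mem_append.1 hf with h | h
      · exact hTRPp.2.1 f h
      · simp at h; subst h; exact he
    · unfold List.Chain'; rw [List.isChain_append]
      refine ⟨hTRPp.2.2, List.isChain_singleton e, ?_⟩
      intro x hx y hy
      simp at hy; subst hy
      rw [List.getLast?_eq_getLast hne] at hx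
      simp at hx; subst hx
      exact ⟨hlastp, by rw [← parr_eq_getLast p hne]; exact htr⟩
  intro j hj1 hj2
  rcases lt_or_eq_of_le hj2 with hlt | heq
  · -- prefix of p
    have hjp : j ≤ p.length := by simpa using Nat.lt_succ_iff.1 (by simpa using hlt)
    rw [List.take_append_of_le_length hjp]
    exact hU j hj1 hjp
  · -- whole path
    rw [heq, List.take_length]
    refine ⟨hTRPpe, ?_⟩
    intro q hq hstart hroute hdep
    obtain ⟨hqne, hqedges, hqchain⟩ := hq
    -- q has length p.length + 1
    have hqlen : q.length = p.length + 1 := by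
      have h1 : (routeOf q).length = (routeOf (p ++ [e])).length := by rw [hroute]
      have h2 : (routeOf q).length = q.length + 1 := by
        simp [routeOf, List.getLast?_eq_getLast hqne]
      have h3 : (routeOf (p ++ [e])).length = p.length + 2 := by
        rw [routeOf_concat']; simp
      omega
    set q' := q.dropLast with hq'
    set f := q.getLast hqne with hf
    have hqdecomp : q' ++ [f] = q := List.dropLast_append_getLast hqne
    have hq'len : q'.length = p.length := by
      rw [hq', List.length_dropLast]
      omega
    have hq'ne : q' ≠ [] := by
      intro h; rw [h] at hq'len; simp at hq'len
      exact hne (List.length_eq_zero_iff.1 hq'len.symm)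
    -- decompose route equality
    have hroute' : q'.map TEdge.tail ++ [f.tail, f.head] =
        p.map TEdge.tail ++ [e.tail, e.head] := by
      have : routeOf q = q'.map TEdge.tail ++ [f.tail, f.head] := by
        rw [← hqdecomp] at *
        rw [routeOf_concat']
      rw [← this, hroute, routeOf_concat']
    have hlen : (q'.map TEdge.tail).length = (p.map TEdge.tail).length := by
      simp [hq'len]
    obtain ⟨htails, hheads⟩ := List.append_inj hroute' hlen
    have hftail : f.tail = e.tail := by simpa using congrArg (fun l => l.head? ) hheads
    have hfhead : f.head = e.head := by
      have := congrArg (fun l => l.getLast?) hheads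
      simpa using this
    -- chain decomposition
    have hchain' : List.Chain' (fun a b => a.head = b.tail ∧ a.arr ≤ b.dep) (q' ++ [f]) := by
      rw [hqdecomp]; exact hqchain
    unfold List.Chain' at hchain'; rw [List.isChain_append] at hchain'
    obtain ⟨hq'chain, -, hlink⟩ := hchain'
    have hlink' := hlink (q'.getLast hq'ne) (by simp [List.getLast?_eq_getLast hq'ne]) f (by simp)
    -- q' is a TRP
    have hTRPq' : TRP G q' := by
      refine ⟨hq'ne, ?_, hq'chain⟩
      intro x hx
      exact hqedges x (by rw [← hqdecomp]; exact List.mem_append_left _ hx)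
    -- routeOf q' = routeOf p
    have hrq' : routeOf q' = routeOf p := by
      simp only [routeOf, List.getLast?_eq_getLast hq'ne, List.getLast?_eq_getLast hne]
      simp only [Option.elim]
      rw [htails, hlink'.1, hftail, hlastp]
    -- startV q' = startV p
    have hsq' : startV q' = startV p := by
      rw [← startV_concat' q' f hq'ne, hqdecomp, hstart, startV_concat' p e hne]
    -- pdep q' = pdep p
    have hdq' : pdep q' = pdep p := by
      rw [← pdep_concat' q' f hq'ne, hqdecomp, hdep, pdep_concat' p e hne]
    -- p dominates q'
    have hdom : parr p ≤ parr q' := by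
      have hDS := hU p.length (by
        rcases List.exists_cons_of_ne_nil hne with ⟨a, l, rfl⟩; simp) le_rfl
      rw [List.take_length] at hDS
      exact hDS.2 q' hTRPq' hsq' hrq' hdq'
    have hfdep : parr p ≤ f.dep := by
      calc parr p ≤ parr q' := hdom
        _ = (q'.getLast hq'ne).arr := parr_eq_getLast q' hq'ne
        _ ≤ f.dep := hlink'.2
    -- f is in G
    have hfG : f ∈ G.edges := hqedges f (by rw [← hqdecomp]; exact List.mem_append_right _ (by simp))
    -- conclude via hmin
    have harr : e.arr ≤ f.arr := by
      by_contra h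
      push_neg at h
      exact hmin ⟨f, hfG, hftail, hfhead, hfdep, h⟩
    rw [parr_concat', ← hqdecomp, parr_concat']
    exact harr
end
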